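/- arXiv:1703.10014 — 5 statements merged into one kernel-verified Lean document; each statement's English description precedes it below -/
import Mathlib

section
/- Let (X,d) and (Y,ρ) be metric spaces and let f_n, f : X → Y (n = 1,2,...). If the sequence (f_n) converges continuously to f, then (f_n) converges pointwise to f and (f_n) is exhaustive. -/
open Filter Topology

/-- If `(fₙ)` converges continuously to `g`, then `(fₙ)` converges
pointwise to `g` and `(fₙ)` is exhaustive. -/
theorem continuousConv_imp_pointwise_and_exhaustive
    {X Y : Type*} [MetricSpace X] [MetricSpace Y]
    (f : ℕ → X → Y) (g : X → Y)
    (hcont : ∀ (x : X) (u : ℕ → X), Tendsto u atTop (𝓝 x) →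
      Tendsto (fun n => f n (u n)) atTop (𝓝 (g x))) :
    (∀ x : X, Tendsto (fun n => f n x) atTop (𝓝 (g x))) ∧
    (∀ x : X, ∀ ε > (0 : ℝ), ∃ δ > (0 : ℝ), ∃ n₀ : ℕ,
      ∀ t : X, dist x t < δ → ∀ n ≥ n₀, dist (f n x) (f n t) < ε) := by
  classical
  have hpt : ∀ x : X, Tendsto (fun n => f n x) atTop (𝓝 (g x)) := fun x =>
    hcont x (fun _ => x) tendsto_const_nhds
  refine ⟨hpt, ?_⟩
  by_contra h
  push_neg at h
  obtain ⟨x, ε, hε, H⟩ := h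
  have key : ∀ m : ℕ, ∃ t : X, ∃ n : ℕ, n ≥ m ∧ dist x t < 1 / (m + 1) ∧
      ε ≤ dist (f n x) (f n t) := by
    intro m
    obtain ⟨t, ht, n, hn, hd⟩ := H (1 / (m + 1)) (by positivity) m
    exact ⟨t, n, hn, ht, hd⟩
  choose T N hN hT hD using key
  set m : ℕ → ℕ := fun k => Nat.rec 0 (fun _ prev => N prev + 1) k with hm
  have hmsucc : ∀ k, m (k + 1) = N (m k) + 1 := fun k => rfl
  set n : ℕ → ℕ := fun k => N (m k) with hn
  set t : ℕ → X := fun k => T (m k) with htdef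
  have sn : StrictMono n := by
    apply strictMono_nat_of_lt_succ
    intro k
    have h1 : n (k + 1) ≥ m (k + 1) := hN _
    rw [hmsucc] at h1
    have h2 : n k = N (m k) := rfl
    omega
  have hmk : ∀ k, m k ≥ k := by
    intro k
    induction k with
    | zero => exact Nat.zero_le _
    | succ k ih =>
      have := hN (m k)
      rw [hmsucc]
      omega
  set u : ℕ → X := fun j => if h : ∃ k, n k = j then t h.choose else x with hu
  have hun : ∀ k, u (n k) = t k := by
    intro k
    have hex : ∃ k', n k' = n k := ⟨k, rfl⟩
    have : hex.choose = k := sn.injective hex.choose_spec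
    simp only [hu, dif_pos hex, this]
  have hdistx : ∀ k, dist (t k) x < 1 / (k + 1) := by
    intro k
    rw [dist_comm]
    refine lt_of_lt_of_le (hT (m k)) ?_
    apply one_div_le_one_div_of_le (by positivity)
    have := hmk k
    exact_mod_cast Nat.succ_le_succ this
  have hutend : Tendsto u atTop (𝓝 x) := by
    rw [Metric.tendsto_atTop]
    intro ε' hε'
    obtain ⟨K, hK⟩ := exists_nat_one_div_lt hε'
    refine ⟨n K, fun j hj => ?_⟩
    by_cases hex : ∃ k, n k = j
    · simp only [hu, dif_pos hex]
      have hk' : K ≤ hex.choose := by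
        by_contra hlt
        push_neg at hlt
        have h3 := sn hlt
        have h4 := hex.choose_spec
        omega
      calc dist (t hex.choose) x < 1 / (hex.choose + 1) := hdistx _
        _ ≤ 1 / (K + 1) := by
            apply one_div_le_one_div_of_le (by positivity)
            exact_mod_cast Nat.succ_le_succ hk'
        _ < ε' := hK
    · simp only [hu, dif_neg hex, dist_self]
      exact hε'
  have h1 := hcont x u hutend
  have h2 := hpt x
  have hd0 : Tendsto (fun j => dist (f j x) (f j (u j))) atTop (𝓝 0) := by
    have := h2.dist h1
    simpa using this
  have hd0' : Tendsto (fun k => dist (f (n k) x) (f (n k) (u (n k)))) atTop (𝓝 0) :=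
    hd0.comp sn.tendsto_atTop
  have : ε ≤ 0 := by
    refine ge_of_tendsto' hd0' fun k => ?_
    rw [hun k]
    exact hD (m k)
  linarith
end

section
/- Let (X,d) and (Y,ρ) be metric spaces and let f_n, f : X → Y (n = 1,2,...). If (f_n) converges pointwise to f and (f_n) is exhaustive, then (f_n) converges continuously to f. -/
open Filter Topology

/-- If `(fₙ)` converges pointwise to `g` and `(fₙ)` is exhaustive,
then `(fₙ)` converges continuously to `g`. -/
theorem pointwise_and_exhaustive_imp_continuousConv
    {X Y : Type*} [MetricSpace X] [MetricSpace Y]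
    (f : ℕ → X → Y) (g : X → Y)
    (hpt : ∀ x : X, Tendsto (fun n => f n x) atTop (𝓝 (g x)))
    (hexh : ∀ x : X, ∀ ε > (0 : ℝ), ∃ δ > (0 : ℝ), ∃ n₀ : ℕ,
      ∀ t : X, dist x t < δ → ∀ n ≥ n₀, dist (f n x) (f n t) < ε) :
    ∀ (x : X) (u : ℕ → X), Tendsto u atTop (𝓝 x) →
      Tendsto (fun n => f n (u n)) atTop (𝓝 (g x)) := by
  intro x u hu
  rw [Metric.tendsto_atTop]
  intro ε hε
  obtain ⟨δ, hδ, n₀, hn₀⟩ := hexh x (ε/2) (by linarith)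
  obtain ⟨N₁, hN₁⟩ := (Metric.tendsto_atTop.1 hu) δ hδ
  obtain ⟨N₂, hN₂⟩ := (Metric.tendsto_atTop.1 (hpt x)) (ε/2) (by linarith)
  refine ⟨max n₀ (max N₁ N₂), fun n hn => ?_⟩
  have h1 : dist (f n x) (f n (u n)) < ε/2 := by
    apply hn₀ (u n) _ n (le_trans (le_max_left _ _) hn)
    rw [dist_comm]
    exact hN₁ n (le_trans (le_trans (le_max_left _ _) (le_max_right _ _)) hn)
  have h2 : dist (f n x) (g x) < ε/2 :=
    hN₂ n (le_trans (le_trans (le_max_right _ _) (le_max_right _ _)) hn)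
  calc dist (f n (u n)) (g x) ≤ dist (f n (u n)) (f n x) + dist (f n x) (g x) :=
        dist_triangle _ _ _
    _ < ε/2 + ε/2 := add_lt_add (by rw [dist_comm]; exact h1) h2
    _ = ε := by ring
end

section
/- Let (X,d) and (Y,ρ) be metric spaces and let f_n, f : X → Y (n = 1,2,...) with (f_n) converging pointwise to f. If f is continuous, then the sequence (f_n) is weakly exhaustive. -/
open Filter Topology

/-- If `(fₙ)` converges pointwise to a continuous function `g`,
then `(fₙ)` is weakly exhaustive. -/
theorem pointwise_continuousLimit_imp_weaklyExhaustive
    {X Y : Type*} [MetricSpace X] [MetricSpace Y]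
    (f : ℕ → X → Y) (g : X → Y)
    (hpt : ∀ x : X, Tendsto (fun n => f n x) atTop (𝓝 (g x)))
    (hg : Continuous g) :
    ∀ x : X, ∀ ε > (0 : ℝ), ∃ δ > (0 : ℝ), ∀ t : X, dist t x < δ →
      ∃ n_t : ℕ, ∀ n ≥ n_t, dist (f n x) (f n t) < ε := by
  intro x ε hε
  have hε3 : 0 < ε / 3 := by linarith
  obtain ⟨δ, hδ, hδg⟩ := Metric.continuous_iff.mp hg x (ε / 3) hε3
  refine ⟨δ, hδ, fun t ht => ?_⟩
  have h1 := Metric.tendsto_atTop.mp (hpt x) (ε / 3) hε3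
  have h2 := Metric.tendsto_atTop.mp (hpt t) (ε / 3) hε3
  obtain ⟨N1, hN1⟩ := h1
  obtain ⟨N2, hN2⟩ := h2
  refine ⟨max N1 N2, fun n hn => ?_⟩
  have hA := hN1 n (le_trans (le_max_left _ _) hn)
  have hB := hN2 n (le_trans (le_max_right _ _) hn)
  have hC := hδg t ht
  calc dist (f n x) (f n t)
      ≤ dist (f n x) (g x) + dist (g x) (g t) + dist (g t) (f n t) :=
        dist_triangle4 _ _ _ _
    _ < ε / 3 + ε / 3 + ε / 3 := by
        have h1' : dist (g x) (g t) < ε / 3 := by rw [dist_comm]; exact hC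
        have h2' : dist (g t) (f n t) < ε / 3 := by rw [dist_comm]; exact hB
        linarith
    _ = ε := by ring
end

section
/- Let (X,d) and (Y,ρ) be metric spaces and let f_n, f : X → Y (n = 1,2,...) with (f_n) converging pointwise to f. If the sequence (f_n) is weakly exhaustive, then f is continuous. -/
open Filter Topology

/-- If `(fₙ)` converges pointwise to `g` and `(fₙ)` is weakly
exhaustive, then `g` is continuous. -/
theorem pointwise_weaklyExhaustive_imp_continuousLimit
    {X Y : Type*} [MetricSpace X] [MetricSpace Y]
    (f : ℕ → X → Y) (g : X → Y)
    (hpt : ∀ x : X, Tendsto (fun n => f n x) atTop (𝓝 (g x)))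
    (hwexh : ∀ x : X, ∀ ε > (0 : ℝ), ∃ δ > (0 : ℝ), ∀ t : X, dist t x < δ →
      ∃ n_t : ℕ, ∀ n ≥ n_t, dist (f n x) (f n t) < ε) :
    Continuous g := by
  rw [Metric.continuous_iff]
  intro x ε hε
  obtain ⟨δ, hδ, hδ'⟩ := hwexh x (ε / 3) (by linarith)
  refine ⟨δ, hδ, fun t ht => ?_⟩
  obtain ⟨n_t, hnt⟩ := hδ' t ht
  obtain ⟨n₁, hn₁⟩ := (Metric.tendsto_atTop.1 (hpt x)) (ε / 3) (by linarith)
  obtain ⟨n₂, hn₂⟩ := (Metric.tendsto_atTop.1 (hpt t)) (ε / 3) (by linarith)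
  set N := max n_t (max n₁ n₂)
  have h1 := hnt N (le_max_left _ _)
  have h2 := hn₁ N (le_trans (le_max_left _ _) (le_max_right _ _))
  have h3 := hn₂ N (le_trans (le_max_right _ _) (le_max_right _ _))
  calc dist (g t) (g x) ≤ dist (g t) (f N t) + dist (f N t) (f N x) + dist (f N x) (g x) :=
        dist_triangle4 _ _ _ _
    _ < ε := by rw [dist_comm (f N t) (f N x), dist_comm (g t) (f N t)]; linarith
end

section
/- Let D be an open subset of ℝ × C([−r,0], ℝ^N) and let f_k : D → ℝ^N (k = 0,1,2,...) be arbitrary functions such that (f_k)_{k≥1} converges continuously to f_0. Let x⁰ : [σ−r, σ+a] → ℝ^N be continuous and suppose W = {(t, x⁰_t) : t ∈ [σ, σ+a]} ⊆ D. Then there exist a neighborhood V of W contained in D, a constant M > 0, and k₀ ∈ ℕ such that ‖f_k(τ,ψ)‖ ≤ M for all (τ,ψ) ∈ V and all k ≥ k₀, and also ‖f_0(τ,ψ)‖ ≤ M for all (τ,ψ) ∈ V. In particular, no uniform boundedness assumption on (f_k) is needed. -/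
open MeasureTheory Filter Set Topology
open scoped Classical

/-- The segment `x_t ∈ C([-r,0], ℝ^N)` of `x : ℝ → ℝ^N`, given by `x_t θ = x (t + θ)`
whenever this restriction is continuous (which holds in all uses below). -/
noncomputable def seg {N : ℕ} (r : ℝ) (x : ℝ → EuclideanSpace ℝ (Fin N)) (t : ℝ) :
    C(Set.Icc (-r) (0 : ℝ), EuclideanSpace ℝ (Fin N)) :=
  if h : Continuous fun θ : Set.Icc (-r) (0 : ℝ) => x (t + θ.1) then ⟨_, h⟩
  else ContinuousMap.const _ (x t)

/-- Auxiliary index sequence: `iterSeq k 0 = 0`, `iterSeq k (j+1) = k (iterSeq k j) + 1`. -/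
def iterSeq (k : ℕ → ℕ) : ℕ → ℕ
  | 0 => 0
  | j + 1 => k (iterSeq k j) + 1

lemma local_bound {X E : Type*} [PseudoMetricSpace X] [NormedAddCommGroup E]
    (D : Set X) (f : ℕ → X → E) (f₀ : X → E)
    (hconv : ∀ p ∈ D, ∀ q : ℕ → X, (∀ k, q k ∈ D) → Tendsto q atTop (𝓝 p) →
      Tendsto (fun k => f k (q k)) atTop (𝓝 (f₀ p)))
    (hD : IsOpen D) (p : X) (hp : p ∈ D) :
    ∃ U : Set X, IsOpen U ∧ p ∈ U ∧ U ⊆ D ∧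
      ∃ k₀ : ℕ, ∀ q ∈ U, ∀ k ≥ k₀, ‖f k q‖ ≤ ‖f₀ p‖ + 1 := by
  by_contra h
  push_neg at h
  set c : ℝ := ‖f₀ p‖ + 1 with hc
  have H : ∀ n : ℕ, ∃ q ∈ Metric.ball p (1 / (n + 1)) ∩ D, ∃ k ≥ n, c < ‖f k q‖ := by
    intro n
    obtain ⟨q, hq, k, hk, hqk⟩ := h (Metric.ball p (1 / (n + 1)) ∩ D)
      (Metric.isOpen_ball.inter hD)
      ⟨Metric.mem_ball_self (by positivity), hp⟩ inter_subset_right n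
    exact ⟨q, hq, k, hk, hqk⟩
  choose q hq k hk hbig using H
  -- build a strictly increasing subsequence of indices
  set n : ℕ → ℕ := iterSeq k with hn
  have hn_succ : ∀ j, n (j + 1) = k (n j) + 1 := fun j => rfl
  let m : ℕ → ℕ := fun j => k (n j)
  have hmono : StrictMono m := by
    apply strictMono_nat_of_lt_succ
    intro j
    have h1 : n (j + 1) ≤ k (n (j + 1)) := hk _
    have h2 : n (j + 1) = k (n j) + 1 := hn_succ j
    show k (n j) < k (n (j + 1))
    omega
  have hnj : ∀ j, j ≤ n j := by
    intro j
    induction j with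
    | zero => exact Nat.zero_le _
    | succ j ih =>
      have : n j ≤ k (n j) := hk _
      rw [hn_succ]; omega
  -- the interleaved sequence
  classical
  let q' : ℕ → X := fun i => if h : ∃ j, m j = i then q (n h.choose) else p
  have hq'D : ∀ i, q' i ∈ D := by
    intro i
    by_cases h : ∃ j, m j = i
    · simp only [q', dif_pos h]; exact (hq _).2
    · simp only [q', dif_neg h]; exact hp
  have htend : Tendsto q' atTop (𝓝 p) := by
    rw [Metric.tendsto_atTop]
    intro ε hε
    obtain ⟨J, hJ⟩ := exists_nat_one_div_lt hε
    refine ⟨m J, fun i hi => ?_⟩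
    by_cases hex : ∃ j, m j = i
    · have hq'i : q' i = q (n hex.choose) := dif_pos hex
      obtain ⟨j0, hj0⟩ := hex
      have hch : (⟨j0, hj0⟩ : ∃ j, m j = i).choose = j0 :=
        hmono.injective ((⟨j0, hj0⟩ : ∃ j, m j = i).choose_spec.trans hj0.symm)
      rw [hq'i, hch]
      have hJle : J ≤ j0 := hmono.le_iff_le.mp (by omega)
      have hd := Metric.mem_ball.mp (hq (n j0)).1
      have h1 : (1 : ℝ) / ((n j0 : ℝ) + 1) ≤ 1 / ((J : ℝ) + 1) := by
        apply one_div_le_one_div_of_le (by positivity)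
        have hJn : J ≤ n j0 := le_trans hJle (hnj _)
        have : (J : ℝ) ≤ (n j0 : ℝ) := by exact_mod_cast hJn
        linarith
      exact lt_trans (lt_of_lt_of_le hd h1) hJ
    · have : q' i = p := dif_neg hex
      rw [this, dist_self]; exact hε
  have := hconv p hp q' hq'D htend
  have hnorm : Tendsto (fun i => ‖f i (q' i)‖) atTop (𝓝 ‖f₀ p‖) := this.norm
  have hev : ∀ᶠ i in atTop, ‖f i (q' i)‖ < c :=
    hnorm.eventually_lt_const (by rw [hc]; linarith)
  obtain ⟨I, hI⟩ := hev.exists_forall_of_atTop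
  have hle : I ≤ m I := hmono.le_apply
  have hEx : ∃ j, m j = m I := ⟨I, rfl⟩
  have : q' (m I) = q (n I) := by
    have := hEx.choose_spec
    have hc' : hEx.choose = I := hmono.injective this
    simp only [q', dif_pos hEx, hc']
  have h1 := hI (m I) hle
  rw [this] at h1
  exact absurd (hbig (n I)) (not_lt.mpr h1.le)

/-- Proposition 3.5. If arbitrary functions `f_k : D → ℝ^N` converge
continuously to `f₀` on the open set `D`, and `W = {(t, x⁰_t) : t ∈ [σ, σ+a]} ⊆ D` for a
continuous `x⁰`, then there are a neighborhood `V` of `W` with `V ⊆ D`, a constant `M > 0`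
and `k₀` such that `‖f_k(τ,ψ)‖ ≤ M` on `V` for all `k ≥ k₀` and also `‖f₀(τ,ψ)‖ ≤ M` on `V`;
no uniform boundedness assumption on `(f_k)` is needed. -/
theorem uniform_bound_near_trajectory_of_continuousConv {N : ℕ} (r σ a : ℝ)
    (hr : 0 ≤ r) (ha : 0 < a)
    (D : Set (ℝ × C(Set.Icc (-r) (0 : ℝ), EuclideanSpace ℝ (Fin N)))) (hD : IsOpen D)
    (f : ℕ → ℝ × C(Set.Icc (-r) (0 : ℝ), EuclideanSpace ℝ (Fin N)) → EuclideanSpace ℝ (Fin N))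
    (f₀ : ℝ × C(Set.Icc (-r) (0 : ℝ), EuclideanSpace ℝ (Fin N)) → EuclideanSpace ℝ (Fin N))
    (hconv : ∀ p ∈ D, ∀ q : ℕ → ℝ × C(Set.Icc (-r) (0 : ℝ), EuclideanSpace ℝ (Fin N)),
      (∀ k, q k ∈ D) → Tendsto q atTop (𝓝 p) →
        Tendsto (fun k => f k (q k)) atTop (𝓝 (f₀ p)))
    (x : ℝ → EuclideanSpace ℝ (Fin N))
    (hx : ContinuousOn x (Set.Icc (σ - r) (σ + a)))
    (hW : ∀ t ∈ Set.Icc σ (σ + a), (t, seg r x t) ∈ D) :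
    ∃ V : Set (ℝ × C(Set.Icc (-r) (0 : ℝ), EuclideanSpace ℝ (Fin N))),
      IsOpen V ∧ (∀ t ∈ Set.Icc σ (σ + a), (t, seg r x t) ∈ V) ∧ V ⊆ D ∧
      ∃ M > (0 : ℝ), ∃ k₀ : ℕ,
        (∀ p ∈ V, ∀ k ≥ k₀, ‖f k p‖ ≤ M) ∧ (∀ p ∈ V, ‖f₀ p‖ ≤ M) := by
  classical
  -- continuity of the trajectory
  have hmap : ∀ p : Set.Icc σ (σ + a) × Set.Icc (-r) (0 : ℝ),
      p.1.1 + p.2.1 ∈ Set.Icc (σ - r) (σ + a) := by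
    rintro ⟨⟨t, ht₁, ht₂⟩, ⟨θ, hθ₁, hθ₂⟩⟩
    constructor <;> simp only [] <;> linarith
  have hFc : Continuous fun p : Set.Icc σ (σ + a) × Set.Icc (-r) (0 : ℝ) =>
      x (p.1.1 + p.2.1) :=
    hx.comp_continuous
      ((continuous_subtype_val.comp continuous_fst).add
        (continuous_subtype_val.comp continuous_snd)) hmap
  set F : C(Set.Icc σ (σ + a) × Set.Icc (-r) (0 : ℝ), EuclideanSpace ℝ (Fin N)) :=
    ⟨_, hFc⟩ with hF
  have hseg_eq : ∀ (t : ℝ) (ht : t ∈ Set.Icc σ (σ + a)),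
      seg r x t = F.curry ⟨t, ht⟩ := by
    intro t ht
    have hcont : Continuous fun θ : Set.Icc (-r) (0 : ℝ) => x (t + θ.1) :=
      hx.comp_continuous (continuous_const.add continuous_subtype_val) (fun θ => hmap (⟨t, ht⟩, θ))
    ext θ
    simp [seg, dif_pos hcont, hF, ContinuousMap.curry]
  -- the trajectory set is compact
  set g : Set.Icc σ (σ + a) → ℝ × C(Set.Icc (-r) (0 : ℝ), EuclideanSpace ℝ (Fin N)) :=
    fun s => ((s : ℝ), F.curry s) with hg
  have hgc : Continuous g := continuous_subtype_val.prodMk F.curry.continuous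
  set K := Set.range g with hK
  have hKcomp : IsCompact K := isCompact_range hgc
  have hKD : K ⊆ D := by
    rintro _ ⟨⟨t, ht⟩, rfl⟩
    have := hW t ht
    rwa [hseg_eq t ht] at this
  -- local bounds around each point of K
  have key : ∀ z ∈ K, ∃ U : Set (ℝ × C(Set.Icc (-r) (0 : ℝ), EuclideanSpace ℝ (Fin N))),
      IsOpen U ∧ z ∈ U ∧ U ⊆ D ∧
      ∃ k₀ : ℕ, ∀ q ∈ U, ∀ k ≥ k₀, ‖f k q‖ ≤ ‖f₀ z‖ + 1 :=
    fun z hz => local_bound D f f₀ hconv hD z (hKD hz)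
  choose! U hUo hzU hUD k₀ hUb using key
  obtain ⟨b, hbK, hbfin, hbcov⟩ := hKcomp.elim_finite_subcover_image
    (fun z hz => hUo z hz) (fun z hz => Set.mem_biUnion hz (hzU z hz))
  refine ⟨⋃ z ∈ b, U z, isOpen_biUnion (fun z hz => hUo z (hbK hz)), ?_, ?_, ?_⟩
  · intro t ht
    have : g ⟨t, ht⟩ ∈ K := Set.mem_range_self _
    have h2 := hbcov this
    rwa [show (t, seg r x t) = g ⟨t, ht⟩ by simp [hg, hseg_eq t ht]]
  · exact Set.iUnion₂_subset fun z hz => hUD z (hbK hz)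
  · refine ⟨1 + ∑ z ∈ hbfin.toFinset, (‖f₀ z‖ + 1), ?_, hbfin.toFinset.sup k₀, ?_, ?_⟩
    · have : (0 : ℝ) ≤ ∑ z ∈ hbfin.toFinset, (‖f₀ z‖ + 1) :=
        Finset.sum_nonneg fun z _ => by positivity
      linarith
    · intro p hp k hk
      obtain ⟨z, hz, hpz⟩ := Set.mem_iUnion₂.mp hp
      have h1 : ‖f k p‖ ≤ ‖f₀ z‖ + 1 :=
        hUb z (hbK hz) p hpz k (le_trans (Finset.le_sup (hbfin.mem_toFinset.mpr hz)) hk)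
      have h2 : ‖f₀ z‖ + 1 ≤ ∑ w ∈ hbfin.toFinset, (‖f₀ w‖ + 1) :=
        Finset.single_le_sum (f := fun w => ‖f₀ w‖ + 1) (fun w _ => by positivity) (hbfin.mem_toFinset.mpr hz)
      linarith
    · intro p hp
      have hpD : p ∈ D := (Set.iUnion₂_subset fun z hz => hUD z (hbK hz)) hp
      have htt : Tendsto (fun k => f k p) atTop (𝓝 (f₀ p)) :=
        hconv p hpD (fun _ => p) (fun _ => hpD) tendsto_const_nhds
      obtain ⟨z, hz, hpz⟩ := Set.mem_iUnion₂.mp hp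
      have h2 : ‖f₀ z‖ + 1 ≤ ∑ w ∈ hbfin.toFinset, (‖f₀ w‖ + 1) :=
        Finset.single_le_sum (f := fun w => ‖f₀ w‖ + 1) (fun w _ => by positivity) (hbfin.mem_toFinset.mpr hz)
      have : ‖f₀ p‖ ≤ ‖f₀ z‖ + 1 := by
        apply le_of_tendsto htt.norm
        filter_upwards [eventually_ge_atTop (k₀ z)] with k hk
        exact hUb z (hbK hz) p hpz k hk
      linarith
end
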